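/- With the same setup, if the holomorphic sectional curvature H(v) is nonnegative for all v and strictly positive for some v₀ ≠ 0, then S + Ŝ > 0. -/

import Mathlib

open Finset
open Complex

lemma char_sum (p q : ℕ) (hp : p ≤ 2) (hq : q ≤ 2) :
    ∑ c : Fin 4, (Complex.I ^ (c:ℕ))^p * ((starRingEnd ℂ) (Complex.I ^ (c:ℕ)))^q
      = if p = q then 4 else 0 := by
  have h3 : ((3 : Fin 4) : ℕ) = 3 := rfl
  have h2 : ((2 : Fin 4) : ℕ) = 2 := rfl
  have h1 : ((1 : Fin 4) : ℕ) = 1 := rfl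
  have h0 : ((0 : Fin 4) : ℕ) = 0 := rfl
  have e2 : Complex.I ^ 2 = -1 := Complex.I_sq
  have e3 : Complex.I ^ 3 = -Complex.I := by
    rw [(by norm_num : 3 = 2 + 1), pow_add, e2]; ring
  have e6 : Complex.I ^ 6 = -1 := by
    rw [(by norm_num : 6 = 2 * 3), pow_mul, e2]; ring
  have e9 : Complex.I ^ 9 = Complex.I := by
    rw [(by norm_num : 9 = 2 * 4 + 1), pow_add, pow_mul, e2]; ring
  have e12 : Complex.I ^ 12 = 1 := by
    rw [(by norm_num : 12 = 2 * 6), pow_mul, e2]; ring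
  interval_cases p <;> interval_cases q <;>
    simp [Fin.sum_univ_four, h0, h1, h2, h3, ← pow_mul, map_pow, Complex.conj_I] <;>
    ring_nf <;> simp [e2, e3, e6, e9, e12] <;> ring

def dd {n : ℕ} (a i k : Fin n) : ℕ := (if i = a then 1 else 0) + (if k = a then 1 else 0)

lemma dd_le {n : ℕ} (a i k : Fin n) : dd a i k ≤ 2 := by
  unfold dd; split_ifs <;> norm_num

lemma prod_pow_dd {n : ℕ} (x : Fin n → ℂ) (i k : Fin n) :
    ∏ a, (x a) ^ (dd a i k) = x i * x k := by
  have : ∀ a : Fin n, x a ^ dd a i k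
      = (if i = a then x a else 1) * (if k = a then x a else 1) := by
    intro a; simp [dd, pow_add, pow_ite]
  rw [Finset.prod_congr rfl fun a _ => this a, Finset.prod_mul_distrib]
  simp [Finset.prod_ite_eq]

lemma phase_sum {n : ℕ} (i j k l : Fin n) :
    ∑ f : Fin n → Fin 4,
      (Complex.I ^ ((f i : ℕ))) * (starRingEnd ℂ) (Complex.I ^ ((f j : ℕ)))
        * (Complex.I ^ ((f k : ℕ))) * (starRingEnd ℂ) (Complex.I ^ ((f l : ℕ)))
      = if (∀ a, dd a i k = dd a j l) then ((4:ℂ))^n else 0 := by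
  have step1 : ∀ f : Fin n → Fin 4,
      (Complex.I ^ ((f i : ℕ))) * (starRingEnd ℂ) (Complex.I ^ ((f j : ℕ)))
        * (Complex.I ^ ((f k : ℕ))) * (starRingEnd ℂ) (Complex.I ^ ((f l : ℕ)))
      = ∏ a, (Complex.I ^ ((f a : ℕ)))^(dd a i k)
          * ((starRingEnd ℂ) (Complex.I ^ ((f a : ℕ))))^(dd a j l) := by
    intro f
    rw [Finset.prod_mul_distrib, prod_pow_dd (fun a => Complex.I ^ ((f a : ℕ))) i k,
        prod_pow_dd (fun a => (starRingEnd ℂ) (Complex.I ^ ((f a : ℕ)))) j l]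
    ring
  rw [Finset.sum_congr rfl fun f _ => step1 f]
  rw [← Fintype.piFinset_univ, ← Finset.prod_univ_sum (fun _ => (Finset.univ : Finset (Fin 4)))
      (fun a c => (Complex.I ^ ((c : ℕ)))^(dd a i k)
        * ((starRingEnd ℂ) (Complex.I ^ ((c : ℕ))))^(dd a j l))]
  rw [Finset.prod_congr rfl fun a _ => char_sum (dd a i k) (dd a j l) (dd_le a i k) (dd_le a j l)]
  by_cases h : ∀ a, dd a i k = dd a j l
  · simp [h, if_pos, Finset.prod_const]
  · rw [if_neg h]
    push_neg at h
    obtain ⟨a, ha⟩ := h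
    exact Finset.prod_eq_zero (Finset.mem_univ a) (by rw [if_neg ha])

lemma dd_cond {n : ℕ} (i j k l : Fin n) :
    (∀ a, dd a i k = dd a j l) ↔ (i = j ∧ k = l) ∨ (i = l ∧ k = j) := by
  constructor
  · intro h
    by_cases hij : i = j
    · subst hij
      refine Or.inl ⟨rfl, ?_⟩
      have hk := h k
      simp only [dd, if_pos rfl] at hk
      by_cases hlk : l = k
      · exact hlk.symm
      · rw [if_neg hlk] at hk; split_ifs at hk <;> omega
    · have hi := h i
      simp only [dd, if_pos rfl, if_neg (fun hji : j = i => hij hji.symm)] at hi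
      have hli : l = i := by
        by_cases hli : l = i
        · exact hli
        · rw [if_neg hli] at hi; split_ifs at hi <;> omega
      have hki : ¬ k = i := by
        intro hki; rw [if_pos hki, if_pos hli] at hi; split_ifs at hi <;> omega
      have hik : ¬ i = k := fun hik => hki hik.symm
      have hlk : ¬ l = k := by
        intro hlk; rw [hli] at hlk; exact hik hlk
      have hk := h k
      simp only [dd, if_pos rfl, if_neg hik, if_neg hlk] at hk
      have hjk : j = k := by
        by_cases hjk : j = k
        · exact hjk
        · rw [if_neg hjk] at hk; split_ifs at hk <;> omega
      exact Or.inr ⟨hli.symm, hjk.symm⟩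
  · rintro (⟨rfl, rfl⟩ | ⟨rfl, rfl⟩) a
    · rfl
    · simp [dd, add_comm]
variable {n : ℕ}

lemma sumA (T : Fin n → Fin n → Fin n → Fin n → ℂ) (c : ℂ) :
    ∑ i, ∑ j, ∑ k, ∑ l, T i j k l * (if i = j ∧ k = l then c else 0)
      = (∑ i, ∑ k, T i i k k) * c := by
  rw [Finset.sum_mul]
  refine Finset.sum_congr rfl fun i _ => ?_
  rw [Finset.sum_eq_single i (fun j _ hj => by
      simp [show ¬(i = j) from fun h => hj h.symm]) (by simp)]
  rw [Finset.sum_mul]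
  refine Finset.sum_congr rfl fun k _ => ?_
  simp [mul_ite, Finset.sum_ite_eq]

lemma sumB (T : Fin n → Fin n → Fin n → Fin n → ℂ) (c : ℂ) :
    ∑ i, ∑ j, ∑ k, ∑ l, T i j k l * (if i = l ∧ k = j then c else 0)
      = (∑ i, ∑ k, T i k k i) * c := by
  rw [Finset.sum_mul]
  refine Finset.sum_congr rfl fun i _ => ?_
  have inner : ∀ j k : Fin n, ∑ l, T i j k l * (if i = l ∧ k = j then c else 0)
      = if k = j then T i j k i * c else 0 := by
    intro j k
    by_cases hkj : k = j
    · simp [hkj, mul_ite, Finset.sum_ite_eq]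
    · simp [hkj]
  rw [Finset.sum_congr rfl fun j _ => Finset.sum_congr rfl fun k _ => inner j k]
  rw [Finset.sum_congr rfl fun j (_ : j ∈ univ) => Finset.sum_ite_eq' univ j (fun k => T i j k i * c)]
  simp [Finset.sum_mul]

lemma sumC (T : Fin n → Fin n → Fin n → Fin n → ℂ) (c : ℂ) :
    ∑ i, ∑ j, ∑ k, ∑ l, T i j k l * (if (i = j ∧ k = l) ∧ (i = l ∧ k = j) then c else 0)
      = (∑ i, T i i i i) * c := by
  have hiff : ∀ i j k l : Fin n,
      ((i = j ∧ k = l) ∧ (i = l ∧ k = j)) ↔ (i = j ∧ k = j ∧ k = l) := by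
    intro i j k l
    constructor
    · rintro ⟨⟨h1, h2⟩, _, h4⟩; exact ⟨h1, h4, h2⟩
    · rintro ⟨h1, h4, h2⟩; exact ⟨⟨h1, h2⟩, ⟨h1.trans (h4.symm.trans h2), h4⟩⟩
  simp only [hiff]
  rw [Finset.sum_mul]
  refine Finset.sum_congr rfl fun i _ => ?_
  have inner : ∀ j k : Fin n, ∑ l, T i j k l * (if i = j ∧ k = j ∧ k = l then c else 0)
      = if i = j ∧ k = j then T i j k k * c else 0 := by
    intro j k
    by_cases h1 : i = j
    · by_cases h2 : k = j
      · simp [h1, h2, mul_ite, Finset.sum_ite_eq]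
      · simp [h1, h2]
    · simp [h1]
  rw [Finset.sum_congr rfl fun j _ => Finset.sum_congr rfl fun k _ => inner j k]
  have inner2 : ∀ j : Fin n, ∑ k, (if i = j ∧ k = j then T i j k k * c else 0)
      = if i = j then T i j j j * c else 0 := by
    intro j
    by_cases h1 : i = j
    · simp only [h1, true_and]
      exact Finset.sum_ite_eq' univ j (fun k => T j j k k * c) |>.trans (by simp)
    · simp [h1]
  rw [Finset.sum_congr rfl fun j _ => inner2 j]
  simp [Finset.sum_ite_eq]

lemma sum4 {n : ℕ} {M : Type*} [AddCommMonoid M] (g : Fin n → Fin n → Fin n → Fin n → M) :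
    ∑ i, ∑ j, ∑ k, ∑ l, g i j k l
      = ∑ t : (Fin n × Fin n) × (Fin n × Fin n), g t.1.1 t.1.2 t.2.1 t.2.2 := by
  symm
  simp only [Fintype.sum_prod_type]

lemma sum4_swap {n : ℕ} (g : Fin n → Fin n → Fin n → Fin n → Fin n → Fin n → Fin n → Fin n → ℂ) :
    ∑ p, ∑ q, ∑ r, ∑ s, ∑ i, ∑ j, ∑ k, ∑ l, g p q r s i j k l
      = ∑ i, ∑ j, ∑ k, ∑ l, ∑ p, ∑ q, ∑ r, ∑ s, g p q r s i j k l := by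
  rw [sum4 (fun p q r s => ∑ i, ∑ j, ∑ k, ∑ l, g p q r s i j k l),
      sum4 (fun i j k l => ∑ p, ∑ q, ∑ r, ∑ s, g p q r s i j k l)]
  rw [Finset.sum_congr rfl fun t _ => sum4 _, Finset.sum_congr rfl fun t _ => sum4 _]
  exact Finset.sum_comm

lemma sum4_swap_left {n : ℕ} (g : (Fin n → Fin 4) → Fin n → Fin n → Fin n → Fin n → ℂ) :
    ∑ f : Fin n → Fin 4, ∑ p, ∑ q, ∑ r, ∑ s, g f p q r s
      = ∑ p, ∑ q, ∑ r, ∑ s, ∑ f : Fin n → Fin 4, g f p q r s := by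
  rw [Finset.sum_congr rfl fun f (_ : f ∈ univ) => sum4 (g f),
      sum4 (fun p q r s => ∑ f : Fin n → Fin 4, g f p q r s)]
  exact Finset.sum_comm

lemma contract {n : ℕ} (T : Fin n → Fin n → Fin n → Fin n → ℂ) (c : ℂ) :
    ∑ i, ∑ j, ∑ k, ∑ l, T i j k l * (if (i = j ∧ k = l) ∨ (i = l ∧ k = j) then c else 0)
      = ((∑ i, ∑ k, T i i k k) + (∑ i, ∑ k, T i k k i) - ∑ i, T i i i i) * c := by
  have key : ∀ (i j k l : Fin n), T i j k l * (if (i = j ∧ k = l) ∨ (i = l ∧ k = j) then c else 0)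
      = T i j k l * (if i = j ∧ k = l then c else 0)
        + T i j k l * (if i = l ∧ k = j then c else 0)
        - T i j k l * (if (i = j ∧ k = l) ∧ (i = l ∧ k = j) then c else 0) := by
    intro i j k l
    by_cases hA : i = j ∧ k = l <;> by_cases hB : i = l ∧ k = j <;> simp [hA, hB] <;> ring
  simp only [key, Finset.sum_add_distrib, Finset.sum_sub_distrib]
  rw [sumA, sumB, sumC]; ring

lemma key_identity {n : ℕ} (T : Fin n → Fin n → Fin n → Fin n → ℂ) :
    ∑ f : Fin n → Fin 4, ∑ p, ∑ q, ∑ r, ∑ s,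
        T p q r s * Complex.I ^ ((f p : ℕ)) * (starRingEnd ℂ) (Complex.I ^ ((f q : ℕ)))
          * Complex.I ^ ((f r : ℕ)) * (starRingEnd ℂ) (Complex.I ^ ((f s : ℕ)))
      = ((∑ p, ∑ r, T p p r r) + (∑ p, ∑ r, T p r r p) - ∑ p, T p p p p) * (4:ℂ)^n := by
  rw [sum4_swap_left]
  have inner : ∀ p q r s : Fin n,
      ∑ f : Fin n → Fin 4,
        T p q r s * Complex.I ^ ((f p : ℕ)) * (starRingEnd ℂ) (Complex.I ^ ((f q : ℕ)))
          * Complex.I ^ ((f r : ℕ)) * (starRingEnd ℂ) (Complex.I ^ ((f s : ℕ)))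
      = T p q r s * (if (p = q ∧ r = s) ∨ (p = s ∧ r = q) then (4:ℂ)^n else 0) := by
    intro p q r s
    rw [Finset.sum_congr rfl fun f (_ : f ∈ univ) => (by ring :
      T p q r s * Complex.I ^ ((f p : ℕ)) * (starRingEnd ℂ) (Complex.I ^ ((f q : ℕ)))
          * Complex.I ^ ((f r : ℕ)) * (starRingEnd ℂ) (Complex.I ^ ((f s : ℕ)))
      = T p q r s * (Complex.I ^ ((f p : ℕ)) * (starRingEnd ℂ) (Complex.I ^ ((f q : ℕ)))
          * Complex.I ^ ((f r : ℕ)) * (starRingEnd ℂ) (Complex.I ^ ((f s : ℕ)))))]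
    rw [← Finset.mul_sum, phase_sum p q r s, if_congr (dd_cond p q r s) rfl rfl]
  simp only [inner]
  exact contract T ((4:ℂ)^n)



lemma sum2 {M : Type*} [AddCommMonoid M] (g : Fin n → Fin n → M) :
    ∑ p, ∑ r, g p r = ∑ t : Fin n × Fin n, g t.1 t.2 :=
  by exact (Fintype.sum_prod_type (fun t : Fin n × Fin n => g t.1 t.2)).symm

lemma sum2_swap4 (g : Fin n → Fin n → Fin n → Fin n → Fin n → Fin n → ℂ) :
    ∑ p, ∑ r, ∑ i, ∑ j, ∑ k, ∑ l, g p r i j k l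
      = ∑ i, ∑ j, ∑ k, ∑ l, ∑ p, ∑ r, g p r i j k l := by
  rw [sum2 (fun p r => ∑ i, ∑ j, ∑ k, ∑ l, g p r i j k l),
      sum4 (fun i j k l => ∑ p, ∑ r, g p r i j k l)]
  rw [Finset.sum_congr rfl fun t _ => sum4 _, Finset.sum_congr rfl fun t _ => sum2 _]
  exact Finset.sum_comm

variable {n : ℕ}

lemma expand2 (C : ℂ) (z u : Fin n → ℂ) :
    C * (∑ r, z r) * (∑ s, u s) = ∑ r, ∑ s, C * z r * u s := by
  rw [Finset.mul_sum univ z C, Finset.sum_mul]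
  exact Finset.sum_congr rfl fun r _ => Finset.mul_sum univ u (C * z r)

lemma expand3 (C : ℂ) (y z u : Fin n → ℂ) :
    C * (∑ q, y q) * (∑ r, z r) * (∑ s, u s) = ∑ q, ∑ r, ∑ s, C * y q * z r * u s := by
  rw [Finset.mul_sum univ y C, Finset.sum_mul, Finset.sum_mul]
  exact Finset.sum_congr rfl fun q _ => expand2 (C * y q) z u

lemma expand4 (C : ℂ) (x y z u : Fin n → ℂ) :
    C * (∑ p, x p) * (∑ q, y q) * (∑ r, z r) * (∑ s, u s)
      = ∑ p, ∑ q, ∑ r, ∑ s, C * x p * y q * z r * u s := by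
  rw [Finset.mul_sum univ x C, Finset.sum_mul, Finset.sum_mul, Finset.sum_mul]
  exact Finset.sum_congr rfl fun p _ => expand3 (C * x p) y z u

lemma mul_sum4 (C : ℂ) (g : Fin n → Fin n → Fin n → Fin n → ℂ) :
    C * (∑ i, ∑ j, ∑ k, ∑ l, g i j k l) = ∑ i, ∑ j, ∑ k, ∑ l, C * g i j k l := by
  simp only [Finset.mul_sum]

lemma transfer (R : Fin n → Fin n → Fin n → Fin n → ℂ) (B : Fin n → Fin n → ℂ)
    (v : Fin n → ℂ) :
    ∑ p, ∑ q, ∑ r, ∑ s,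
        (∑ i, ∑ j, ∑ k, ∑ l,
          R i j k l * B p i * (starRingEnd ℂ) (B q j) * B r k * (starRingEnd ℂ) (B s l))
        * v p * (starRingEnd ℂ) (v q) * v r * (starRingEnd ℂ) (v s)
      = ∑ i, ∑ j, ∑ k, ∑ l, R i j k l * (∑ p, v p * B p i)
          * (starRingEnd ℂ) (∑ q, v q * B q j) * (∑ r, v r * B r k)
          * (starRingEnd ℂ) (∑ s, v s * B s l) := by
  have step1 : ∀ p q r s : Fin n,
      (∑ i, ∑ j, ∑ k, ∑ l,
          R i j k l * B p i * (starRingEnd ℂ) (B q j) * B r k * (starRingEnd ℂ) (B s l))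
        * v p * (starRingEnd ℂ) (v q) * v r * (starRingEnd ℂ) (v s)
      = ∑ i, ∑ j, ∑ k, ∑ l,
          R i j k l * B p i * (starRingEnd ℂ) (B q j) * B r k * (starRingEnd ℂ) (B s l)
            * v p * (starRingEnd ℂ) (v q) * v r * (starRingEnd ℂ) (v s) := by
    intro p q r s
    simp only [Finset.sum_mul]
  simp only [step1]
  rw [sum4_swap (fun p q r s i j k l =>
    R i j k l * B p i * (starRingEnd ℂ) (B q j) * B r k * (starRingEnd ℂ) (B s l)
      * v p * (starRingEnd ℂ) (v q) * v r * (starRingEnd ℂ) (v s))]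
  refine Finset.sum_congr rfl fun i _ => Finset.sum_congr rfl fun j _ =>
    Finset.sum_congr rfl fun k _ => Finset.sum_congr rfl fun l _ => ?_
  rw [map_sum, map_sum,
    expand4 (R i j k l) (fun p => v p * B p i)
      (fun q => (starRingEnd ℂ) (v q * B q j)) (fun r => v r * B r k)
      (fun s => (starRingEnd ℂ) (v s * B s l))]
  refine Finset.sum_congr rfl fun p _ => Finset.sum_congr rfl fun q _ =>
    Finset.sum_congr rfl fun r _ => Finset.sum_congr rfl fun s _ => ?_
  rw [map_mul, map_mul]
  ring

lemma traceS (R : Fin n → Fin n → Fin n → Fin n → ℂ) (B : Fin n → Fin n → ℂ)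
    (comp : ∀ i j : Fin n, ∑ p, B p i * (starRingEnd ℂ) (B p j) = if i = j then 1 else 0) :
    ∑ p, ∑ r, (∑ i, ∑ j, ∑ k, ∑ l,
        R i j k l * B p i * (starRingEnd ℂ) (B p j) * B r k * (starRingEnd ℂ) (B r l))
      = ∑ i, ∑ k, R i i k k := by
  rw [sum2_swap4 (fun p r i j k l =>
    R i j k l * B p i * (starRingEnd ℂ) (B p j) * B r k * (starRingEnd ℂ) (B r l))]
  have inner : ∀ i j k l : Fin n,
      ∑ p, ∑ r, R i j k l * B p i * (starRingEnd ℂ) (B p j) * B r k * (starRingEnd ℂ) (B r l)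
      = R i j k l * (if i = j then (1:ℂ) else 0) * (if k = l then (1:ℂ) else 0) := by
    intro i j k l
    rw [show (∑ p, ∑ r, R i j k l * B p i * (starRingEnd ℂ) (B p j) * B r k
          * (starRingEnd ℂ) (B r l))
        = ∑ p, ∑ r, R i j k l * (B p i * (starRingEnd ℂ) (B p j))
            * (B r k * (starRingEnd ℂ) (B r l)) from
      Finset.sum_congr rfl fun p _ => Finset.sum_congr rfl fun r _ => by ring]
    rw [← expand2 (R i j k l) (fun p => B p i * (starRingEnd ℂ) (B p j))
      (fun r => B r k * (starRingEnd ℂ) (B r l)), comp i j, comp k l]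
  simp only [inner]
  refine Finset.sum_congr rfl fun i _ => ?_
  rw [Finset.sum_eq_single i (fun j _ hj => by
      simp [show ¬ i = j from fun h => hj h.symm]) (by simp)]
  simp only [if_pos rfl, mul_one]
  refine Finset.sum_congr rfl fun k _ => ?_
  simp [mul_ite, Finset.sum_ite_eq]

lemma traceHatS (R : Fin n → Fin n → Fin n → Fin n → ℂ) (B : Fin n → Fin n → ℂ)
    (comp : ∀ i j : Fin n, ∑ p, B p i * (starRingEnd ℂ) (B p j) = if i = j then 1 else 0) :
    ∑ p, ∑ r, (∑ i, ∑ j, ∑ k, ∑ l,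
        R i j k l * B p i * (starRingEnd ℂ) (B r j) * B r k * (starRingEnd ℂ) (B p l))
      = ∑ i, ∑ k, R i k k i := by
  rw [sum2_swap4 (fun p r i j k l =>
    R i j k l * B p i * (starRingEnd ℂ) (B r j) * B r k * (starRingEnd ℂ) (B p l))]
  have inner : ∀ i j k l : Fin n,
      ∑ p, ∑ r, R i j k l * B p i * (starRingEnd ℂ) (B r j) * B r k * (starRingEnd ℂ) (B p l)
      = R i j k l * (if i = l then (1:ℂ) else 0) * (if k = j then (1:ℂ) else 0) := by
    intro i j k l
    rw [show (∑ p, ∑ r, R i j k l * B p i * (starRingEnd ℂ) (B r j) * B r k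
          * (starRingEnd ℂ) (B p l))
        = ∑ p, ∑ r, R i j k l * (B p i * (starRingEnd ℂ) (B p l))
            * (B r k * (starRingEnd ℂ) (B r j)) from
      Finset.sum_congr rfl fun p _ => Finset.sum_congr rfl fun r _ => by ring]
    rw [← expand2 (R i j k l) (fun p => B p i * (starRingEnd ℂ) (B p l))
      (fun r => B r k * (starRingEnd ℂ) (B r j)), comp i l, comp k j]
  simp only [inner]
  refine Finset.sum_congr rfl fun i _ => Finset.sum_congr rfl fun j _ => ?_
  rw [Finset.sum_eq_single j (fun k _ hk => by simp [hk]) (by simp)]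
  simp only [if_pos rfl, mul_one]
  simp [mul_ite, Finset.sum_ite_eq]

lemma transfer' {n : ℕ} (R : Fin n → Fin n → Fin n → Fin n → ℂ) (B : Fin n → Fin n → ℂ)
    (f : Fin n → Fin 4) :
    ∑ p, ∑ q, ∑ r, ∑ s,
        (∑ i, ∑ j, ∑ k, ∑ l,
          R i j k l * B p i * (starRingEnd ℂ) (B q j) * B r k * (starRingEnd ℂ) (B s l))
        * Complex.I ^ ((f p : ℕ)) * (starRingEnd ℂ) (Complex.I ^ ((f q : ℕ)))
        * Complex.I ^ ((f r : ℕ)) * (starRingEnd ℂ) (Complex.I ^ ((f s : ℕ)))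
      = ∑ i, ∑ j, ∑ k, ∑ l, R i j k l * (∑ p, Complex.I ^ ((f p : ℕ)) * B p i)
          * (starRingEnd ℂ) (∑ q, Complex.I ^ ((f q : ℕ)) * B q j)
          * (∑ r, Complex.I ^ ((f r : ℕ)) * B r k)
          * (starRingEnd ℂ) (∑ s, Complex.I ^ ((f s : ℕ)) * B s l) :=
  transfer R B (fun a => Complex.I ^ ((f a : ℕ)))

lemma key_identity' {n : ℕ} (R : Fin n → Fin n → Fin n → Fin n → ℂ) (B : Fin n → Fin n → ℂ) :
    ∑ f : Fin n → Fin 4, ∑ p, ∑ q, ∑ r, ∑ s,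
        (∑ i, ∑ j, ∑ k, ∑ l,
          R i j k l * B p i * (starRingEnd ℂ) (B q j) * B r k * (starRingEnd ℂ) (B s l))
        * Complex.I ^ ((f p : ℕ)) * (starRingEnd ℂ) (Complex.I ^ ((f q : ℕ)))
        * Complex.I ^ ((f r : ℕ)) * (starRingEnd ℂ) (Complex.I ^ ((f s : ℕ)))
      = ((∑ p, ∑ r, (∑ i, ∑ j, ∑ k, ∑ l,
            R i j k l * B p i * (starRingEnd ℂ) (B p j) * B r k * (starRingEnd ℂ) (B r l)))
          + (∑ p, ∑ r, (∑ i, ∑ j, ∑ k, ∑ l,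
            R i j k l * B p i * (starRingEnd ℂ) (B r j) * B r k * (starRingEnd ℂ) (B p l)))
          - ∑ p, (∑ i, ∑ j, ∑ k, ∑ l,
            R i j k l * B p i * (starRingEnd ℂ) (B p j) * B p k * (starRingEnd ℂ) (B p l)))
        * (4:ℂ)^n :=
  key_identity (fun p q r s => ∑ i, ∑ j, ∑ k, ∑ l,
    R i j k l * B p i * (starRingEnd ℂ) (B q j) * B r k * (starRingEnd ℂ) (B s l))

lemma grand {n : ℕ} (R : Fin n → Fin n → Fin n → Fin n → ℂ) (B : Fin n → Fin n → ℂ)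
    (comp : ∀ i j : Fin n, ∑ p, B p i * (starRingEnd ℂ) (B p j) = if i = j then 1 else 0) :
    ∑ f : Fin n → Fin 4, (∑ i, ∑ j, ∑ k, ∑ l,
        R i j k l * (∑ p, Complex.I ^ ((f p : ℕ)) * B p i)
          * (starRingEnd ℂ) (∑ q, Complex.I ^ ((f q : ℕ)) * B q j)
          * (∑ r, Complex.I ^ ((f r : ℕ)) * B r k)
          * (starRingEnd ℂ) (∑ s, Complex.I ^ ((f s : ℕ)) * B s l))
      = ((∑ i, ∑ k, R i i k k) + (∑ i, ∑ k, R i k k i)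
          - ∑ p, (∑ i, ∑ j, ∑ k, ∑ l,
            R i j k l * B p i * (starRingEnd ℂ) (B p j) * B p k * (starRingEnd ℂ) (B p l)))
        * (4:ℂ)^n := by
  rw [← traceS R B comp, ← traceHatS R B comp, ← key_identity' R B]
  exact Finset.sum_congr rfl fun f _ => (transfer' R B f).symm

lemma exists_good_basis (n : ℕ) (hn : 1 ≤ n) (v₀ : Fin n → ℂ) (hv : v₀ ≠ 0) :
    ∃ (B : Fin n → Fin n → ℂ) (c : ℝ), 0 < c ∧
      (∀ i, B ⟨0, hn⟩ i = (c:ℂ) * v₀ i) ∧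
      (∀ i j : Fin n, ∑ p, B p i * (starRingEnd ℂ) (B p j) = if i = j then 1 else 0) := by
  set v₀' : EuclideanSpace ℂ (Fin n) := WithLp.toLp 2 v₀ with hv₀'
  have hne : v₀' ≠ 0 := by
    intro h; apply hv; funext i; exact congrArg (fun w : EuclideanSpace ℂ (Fin n) => w i) h
  have hnorm : ‖v₀'‖ ≠ 0 := norm_ne_zero_iff.mpr hne
  set u : EuclideanSpace ℂ (Fin n) := (‖v₀'‖⁻¹ : ℂ) • v₀' with hu
  have hun : ‖u‖ = 1 := by
    rw [hu, norm_smul]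
    simp [norm_inv, hnorm]
  have horth : Orthonormal ℂ (Set.restrict {(⟨0, hn⟩ : Fin n)} (fun _ : Fin n => u)) := by
    rw [orthonormal_iff_ite]
    intro i j
    have hij : i = j := Subsingleton.elim i j
    subst hij
    simp only [if_pos rfl, Set.restrict_apply]
    rw [@inner_self_eq_norm_sq_to_K ℂ]
    rw [show ‖Set.restrict {(⟨0, hn⟩ : Fin n)} (fun _ : Fin n => u) i‖ = ‖u‖ from rfl, hun]; norm_num
  obtain ⟨b, hb⟩ := horth.exists_orthonormalBasis_extension_of_card_eq
    (by simp [finrank_euclideanSpace_fin])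
  refine ⟨fun p i => b p i, ‖v₀'‖⁻¹, by positivity, ?_, ?_⟩
  · intro i
    show b ⟨0, hn⟩ i = _
    rw [hb _ rfl, hu]
    simp [PiLp.smul_apply]; exact Or.inl rfl
  · intro i j
    have := b.sum_inner_mul_inner (EuclideanSpace.single i (1:ℂ)) (EuclideanSpace.single j (1:ℂ))
    simp only [EuclideanSpace.inner_single_left, EuclideanSpace.inner_single_right, map_one,
      one_mul, mul_one] at this
    rw [this]
    simp only [EuclideanSpace.single_apply]
    by_cases h : i = j
    · simp [h]
    · rw [if_neg h, if_neg (fun hh : j = i => h hh.symm)]; simp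

/-- Berger's averaging trick, quasi-positive version: if the holomorphic sectional
curvature `H(v)` of a curvature-type tensor `R` on `ℂ^n` is nonnegative for all `v`
and strictly positive for some `v₀ ≠ 0`, then `S + Ŝ > 0`. -/
theorem berger_averaging_quasi_pos (n : ℕ) (hn : 1 ≤ n)
    (R : Fin n → Fin n → Fin n → Fin n → ℂ)
    (hsym1 : ∀ i j k l, R i j k l = (starRingEnd ℂ) (R j i l k))
    (hsym2 : ∀ i j k l, R i j k l = R k j i l)
    (hnonneg : ∀ v : Fin n → ℂ,
      0 ≤ (∑ i, ∑ j, ∑ k, ∑ l,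
        R i j k l * v i * (starRingEnd ℂ) (v j) * v k * (starRingEnd ℂ) (v l)).re)
    (hpos : ∃ v₀ : Fin n → ℂ, v₀ ≠ 0 ∧
      0 < (∑ i, ∑ j, ∑ k, ∑ l,
        R i j k l * v₀ i * (starRingEnd ℂ) (v₀ j) * v₀ k * (starRingEnd ℂ) (v₀ l)).re) :
    0 < ((∑ i, ∑ k, R i i k k) + (∑ i, ∑ k, R i k k i)).re := by
  obtain ⟨v₀, hv, hp⟩ := hpos
  obtain ⟨B, c, hc, hB0, comp⟩ := exists_good_basis n hn v₀ hv
  have hgrand := grand R B comp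
  -- diagonal terms are nonnegative
  have hdiag : ∀ p : Fin n, 0 ≤ (∑ i, ∑ j, ∑ k, ∑ l,
      R i j k l * B p i * (starRingEnd ℂ) (B p j) * B p k * (starRingEnd ℂ) (B p l)).re :=
    fun p => hnonneg (B p)
  -- phase sums are nonnegative
  have hph : ∀ f : Fin n → Fin 4, 0 ≤ (∑ i, ∑ j, ∑ k, ∑ l,
      R i j k l * (∑ p, Complex.I ^ ((f p : ℕ)) * B p i)
        * (starRingEnd ℂ) (∑ q, Complex.I ^ ((f q : ℕ)) * B q j)
        * (∑ r, Complex.I ^ ((f r : ℕ)) * B r k)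
        * (starRingEnd ℂ) (∑ s, Complex.I ^ ((f s : ℕ)) * B s l)).re :=
    fun f => hnonneg (fun i => ∑ p, Complex.I ^ ((f p : ℕ)) * B p i)
  -- define D
  set D : ℂ := ∑ p, (∑ i, ∑ j, ∑ k, ∑ l,
      R i j k l * B p i * (starRingEnd ℂ) (B p j) * B p k * (starRingEnd ℂ) (B p l)) with hD
  set Z : ℂ := (∑ i, ∑ k, R i i k k) + (∑ i, ∑ k, R i k k i) with hZ
  -- real part of grand identity
  have hre : 0 ≤ (Z - D).re := by
    have h1 : ((Z - D) * (4:ℂ)^n).re = (Z - D).re * (4:ℝ)^n := by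
      rw [show ((4:ℂ)^n) = (((4:ℝ)^n : ℝ) : ℂ) by push_cast; ring]
      rw [mul_comm, Complex.re_ofReal_mul, mul_comm]
    have h2 : 0 ≤ ((Z - D) * (4:ℂ)^n).re := by
      rw [← hgrand, Complex.re_sum]
      exact Finset.sum_nonneg fun f _ => hph f
    rw [h1] at h2
    have h4 : (0:ℝ) < (4:ℝ)^n := by positivity
    nlinarith
  -- D.re is strictly positive
  have hDpos : 0 < D.re := by
    rw [hD, Complex.re_sum]
    refine Finset.sum_pos' (fun p _ => hdiag p) ⟨⟨0, hn⟩, Finset.mem_univ _, ?_⟩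
    have hBeq : (fun i => B ⟨0, hn⟩ i) = fun i => (c:ℂ) * v₀ i := funext hB0
    have hfun : B ⟨0, hn⟩ = fun i => (c:ℂ) * v₀ i := hBeq
    rw [show (∑ i, ∑ j, ∑ k, ∑ l,
        R i j k l * B ⟨0, hn⟩ i * (starRingEnd ℂ) (B ⟨0, hn⟩ j) * B ⟨0, hn⟩ k
          * (starRingEnd ℂ) (B ⟨0, hn⟩ l))
      = ∑ i, ∑ j, ∑ k, ∑ l,
        R i j k l * ((c:ℂ) * v₀ i) * (starRingEnd ℂ) ((c:ℂ) * v₀ j) * ((c:ℂ) * v₀ k)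
          * (starRingEnd ℂ) ((c:ℂ) * v₀ l) from by rw [hfun]]
    have hscale : (∑ i, ∑ j, ∑ k, ∑ l,
        R i j k l * ((c:ℂ) * v₀ i) * (starRingEnd ℂ) ((c:ℂ) * v₀ j) * ((c:ℂ) * v₀ k)
          * (starRingEnd ℂ) ((c:ℂ) * v₀ l))
        = ((c:ℂ))^4 * ∑ i, ∑ j, ∑ k, ∑ l,
            R i j k l * v₀ i * (starRingEnd ℂ) (v₀ j) * v₀ k * (starRingEnd ℂ) (v₀ l) := by
      calc (∑ i, ∑ j, ∑ k, ∑ l,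
          R i j k l * ((c:ℂ) * v₀ i) * (starRingEnd ℂ) ((c:ℂ) * v₀ j) * ((c:ℂ) * v₀ k)
            * (starRingEnd ℂ) ((c:ℂ) * v₀ l))
          = ∑ i, ∑ j, ∑ k, ∑ l, ((c:ℂ))^4
              * (R i j k l * v₀ i * (starRingEnd ℂ) (v₀ j) * v₀ k * (starRingEnd ℂ) (v₀ l)) := by
            refine Finset.sum_congr rfl fun i _ => Finset.sum_congr rfl fun j _ =>
              Finset.sum_congr rfl fun k _ => Finset.sum_congr rfl fun l _ => ?_
            rw [map_mul, map_mul, Complex.conj_ofReal]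
            ring
        _ = ((c:ℂ))^4 * ∑ i, ∑ j, ∑ k, ∑ l,
              R i j k l * v₀ i * (starRingEnd ℂ) (v₀ j) * v₀ k * (starRingEnd ℂ) (v₀ l) := by
            exact (mul_sum4 ((c:ℂ)^4) (fun i j k l =>
              R i j k l * v₀ i * (starRingEnd ℂ) (v₀ j) * v₀ k * (starRingEnd ℂ) (v₀ l))).symm
    rw [hscale, show ((c:ℂ))^4 = (((c^4 : ℝ)) : ℂ) by push_cast; ring]
    rw [Complex.re_ofReal_mul]
    positivity
  have : 0 ≤ Z.re - D.re := by
    have := hre; rwa [Complex.sub_re] at this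
  have goal : 0 < Z.re := by linarith
  rwa [hZ] at goal
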